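/- Let K > 0 be a real number and let u be a complex number with Re(u) < 0. Then the bilateral Laplace transform of the put payoff exists and satisfies ∫_{-∞}^{∞} max(K - e^x, 0) · e^{-u x} dx = K^{1-u} / (u(u-1)). -/

import Mathlib

open MeasureTheory Complex Set Filter Topology intervalIntegral

lemma norm_cexp_mul_ofReal (c : ℂ) (x : ℝ) :
    ‖Complex.exp (c * x)‖ = Real.exp (c.re * x) := by
  rw [Complex.norm_exp]
  norm_num [Complex.mul_re]

lemma integrableOn_cexp_Iic {c : ℂ} (hc : 0 < c.re) (a : ℝ) :
    IntegrableOn (fun x : ℝ => Complex.exp (c * x)) (Iic a) := by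
  apply integrableOn_Iic_of_intervalIntegral_norm_bounded
      (Real.exp (c.re * a) / c.re) a (a := fun i : ℝ => i) (l := atBot) ?_ tendsto_id ?_
  · intro i
    exact ((Complex.continuous_exp.comp (by continuity)).integrableOn_Icc).mono_set
      Ioc_subset_Icc_self
  · filter_upwards with y
    have h0 : (∫ x in y..a, ‖Complex.exp (c * x)‖) = ∫ x in y..a, Real.exp (c.re * x) := by
      simp only [norm_cexp_mul_ofReal]
    rw [h0, intervalIntegral.integral_comp_mul_left (fun t => Real.exp t) hc.ne']
    rw [integral_exp, smul_eq_mul, div_eq_inv_mul]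
    have h1 : (0:ℝ) < c.re⁻¹ := inv_pos.2 hc
    have h2 : Real.exp (c.re * a) - Real.exp (c.re * y) ≤ Real.exp (c.re * a) := by
      have := (Real.exp_pos (c.re * y)).le; linarith
    exact mul_le_mul_of_nonneg_left h2 h1.le

lemma integral_cexp_Iic {c : ℂ} (hc : 0 < c.re) (a : ℝ) :
    ∫ x in Iic a, Complex.exp (c * x) = Complex.exp (c * a) / c := by
  have hc0 : c ≠ 0 := fun h => by simp [h] at hc
  have D : ∀ x : ℝ, HasDerivAt (fun y : ℝ => Complex.exp (c * y) / c)
      (Complex.exp (c * x)) x := by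
    intro x
    rw [show Complex.exp (c * x) = Complex.exp (c * x) * c / c by field_simp]
    exact (((Complex.hasDerivAt_exp _).comp x
      (by simpa only [mul_one, id_eq] using
        ((hasDerivAt_id (x : ℂ)).const_mul c).comp_ofReal))).div_const c
  have hlim : Tendsto (fun y : ℝ => Complex.exp (c * y) / c) atBot (𝓝 0) := by
    rw [tendsto_zero_iff_norm_tendsto_zero]
    simp only [norm_div, norm_cexp_mul_ofReal]
    rw [show (0:ℝ) = 0 / ‖c‖ by simp]
    exact (Real.tendsto_exp_atBot.comp (tendsto_id.const_mul_atBot hc)).div_const _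
  have := integral_Iic_of_hasDerivAt_of_tendsto
    (f := fun y : ℝ => Complex.exp (c * y) / c) (f' := fun y : ℝ => Complex.exp (c * y))
    (a := a) (m := 0) (D a).continuousAt.continuousWithinAt (fun x _ => D x)
    (integrableOn_cexp_Iic hc a) hlim
  simpa using this

/-- Bilateral Laplace transform of the put payoff: for `K > 0` and `Re u < 0`,
`∫ (K - e^x)_+ e^{-ux} dx = K^{1-u} / (u (u-1))`. -/
theorem put_payoff_laplace_transform (K : ℝ) (hK : 0 < K) (u : ℂ) (hu : u.re < 0) :
    Integrable (fun x : ℝ => ((max (K - Real.exp x) 0 : ℝ) : ℂ) * Complex.exp (-u * x)) ∧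
    ∫ x : ℝ, ((max (K - Real.exp x) 0 : ℝ) : ℂ) * Complex.exp (-u * x)
      = (K : ℂ) ^ ((1 : ℂ) - u) / (u * (u - 1)) := by
  set L := Real.log K with hL
  have h1 : 0 < (-u).re := by simp [hu]
  have h2 : 0 < ((1:ℂ) - u).re := by simp; linarith
  have hu0 : u ≠ 0 := fun h => by simp [h] at hu
  have hu1 : (1:ℂ) - u ≠ 0 := fun h => by
    rw [h] at h2; simp at h2
  set g : ℝ → ℂ := fun x => (K : ℂ) * Complex.exp (-u * x) - Complex.exp ((1 - u) * x)
    with hg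
  have hfg : (fun x : ℝ => ((max (K - Real.exp x) 0 : ℝ) : ℂ) * Complex.exp (-u * x))
      = (Iic L).indicator g := by
    funext x
    by_cases hx : x ≤ L
    · have hx' : Real.exp x ≤ K := by
        rw [← Real.exp_log hK]; exact Real.exp_le_exp.2 hx
      rw [indicator_of_mem (mem_Iic.2 hx)]
      rw [max_eq_left (by linarith)]
      push_cast
      rw [hg]
      simp only [sub_mul, ← Complex.ofReal_exp]
      congr 1
      rw [Complex.ofReal_exp, ← Complex.exp_add]
      congr 1
      ring
    · rw [indicator_of_notMem (fun h => hx (mem_Iic.1 h))]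
      have hx' : K ≤ Real.exp x := by
        rw [← Real.exp_log hK]; exact Real.exp_le_exp.2 (le_of_not_ge hx)
      rw [max_eq_right (by linarith)]
      simp
  have hgint : IntegrableOn g (Iic L) :=
    (((integrableOn_cexp_Iic h1 L).const_mul _)).sub (integrableOn_cexp_Iic h2 L)
  have hint : Integrable ((Iic L).indicator g) :=
    (integrable_indicator_iff measurableSet_Iic).2 hgint
  have hKC : (K : ℂ) ≠ 0 := by exact_mod_cast hK.ne'
  have key : ∀ w : ℂ, Complex.exp (w * L) = (K : ℂ) ^ w := by
    intro w
    rw [Complex.cpow_def_of_ne_zero hKC, ← Complex.ofReal_log hK.le, mul_comm]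
  constructor
  · rw [hfg]; exact hint
  · rw [hfg, MeasureTheory.integral_indicator measurableSet_Iic]
    rw [integral_sub ((integrableOn_cexp_Iic h1 L).const_mul _) (integrableOn_cexp_Iic h2 L),
      MeasureTheory.integral_const_mul, integral_cexp_Iic h1, integral_cexp_Iic h2,
      key, key]
    have e1 : (K : ℂ) * (K : ℂ) ^ (-u) = (K : ℂ) ^ ((1:ℂ) - u) := by
      rw [show (1:ℂ) - u = 1 + -u by ring, Complex.cpow_add _ _ hKC, Complex.cpow_one]
    have h3 : u * (u - 1) ≠ 0 := mul_ne_zero hu0 (fun h => hu1 (by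
      rw [sub_eq_zero] at h ⊢; exact h.symm))
    rw [mul_div_assoc', e1]
    rw [div_sub_div _ _ (neg_ne_zero.2 hu0) hu1,
      div_eq_div_iff (mul_ne_zero (neg_ne_zero.2 hu0) hu1) h3]
    ring
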